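/- There is no view-distance-1 verifier A over the label type Bool satisfying both: (completeness) for every n and every connected simple graph G on Fin n that contains a cycle, there exists a labeling L : Fin n → Bool such that A(G, L, v) = true for every vertex v; and (soundness) for every n ≥ 1 and every connected acyclic simple graph G on Fin n, for every labeling L : Fin n → Bool there exists a vertex v with A(G, L, v) = false. -/

import Mathlib

/-- `A` is a view-distance-`d` verifier over the label type `Λ`: its verdict at a
vertex is invariant under labeled pointed isomorphisms of radius-`d` balls. -/
def IsLocalVerifier (Λ : Type*) (d : ℕ)
    (A : ∀ n : ℕ, SimpleGraph (Fin n) → (Fin n → Λ) → Fin n → Bool) : Prop :=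
  ∀ (n n' : ℕ) (G : SimpleGraph (Fin n)) (G' : SimpleGraph (Fin n'))
    (L : Fin n → Λ) (L' : Fin n' → Λ) (v : Fin n) (v' : Fin n')
    (φ : G.induce {u | G.dist v u ≤ d} ≃g G'.induce {u | G'.dist v' u ≤ d})
    (hv : G.dist v v ≤ d),
    (↑(φ ⟨v, hv⟩) = v') →
    (∀ u : {u | G.dist v u ≤ d}, L' ↑(φ u) = L ↑u) →
    A n G L v = A n' G' L' v'

namespace NoTwoLabel

open SimpleGraph

/-! ### distance-1 balls -/

lemma dist_le_one_iff {V : Type*} {G : SimpleGraph V} (hG : G.Connected) (v u : V) :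
    G.dist v u ≤ 1 ↔ u = v ∨ G.Adj v u := by
  constructor
  · intro h
    rcases Nat.le_one_iff_eq_zero_or_eq_one.mp h with h0 | h1
    · exact Or.inl ((hG.dist_eq_zero_iff.mp h0).symm)
    · exact Or.inr (SimpleGraph.dist_eq_one_iff_adj.mp h1)
  · rintro (rfl | h)
    · simp [SimpleGraph.dist_self]
    · exact le_of_eq (SimpleGraph.dist_eq_one_iff_adj.mpr h)

/-- Generic transfer of verdicts along an isomorphism of radius-1 balls,
    phrased with raw functions. -/
lemma transfer {A : ∀ n : ℕ, SimpleGraph (Fin n) → (Fin n → Bool) → Fin n → Bool}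
    (hA : IsLocalVerifier Bool 1 A) {n n' : ℕ}
    {G : SimpleGraph (Fin n)} {G' : SimpleGraph (Fin n')}
    {L : Fin n → Bool} {L' : Fin n' → Bool} {v : Fin n} {v' : Fin n'}
    (f : Fin n → Fin n') (g : Fin n' → Fin n)
    (hf : ∀ u, G.dist v u ≤ 1 → G'.dist v' (f u) ≤ 1)
    (hg : ∀ u', G'.dist v' u' ≤ 1 → G.dist v (g u') ≤ 1)
    (hgf : ∀ u, G.dist v u ≤ 1 → g (f u) = u)
    (hfg : ∀ u', G'.dist v' u' ≤ 1 → f (g u') = u')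
    (hadj : ∀ u w, G.dist v u ≤ 1 → G.dist v w ≤ 1 → (G'.Adj (f u) (f w) ↔ G.Adj u w))
    (hfv : f v = v')
    (hLf : ∀ u, G.dist v u ≤ 1 → L' (f u) = L u) :
    A n G L v = A n' G' L' v' := by
  have hvv : G.dist v v ≤ 1 := by
    rw [SimpleGraph.dist_self]; exact Nat.zero_le 1
  exact hA n n' G G' L L' v v'
    ⟨⟨fun x => ⟨f x.1, hf x.1 x.2⟩, fun y => ⟨g y.1, hg y.1 y.2⟩,
      fun x => Subtype.ext (hgf x.1 x.2), fun y => Subtype.ext (hfg y.1 y.2)⟩,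
      @fun x y => hadj x.1 y.1 x.2 y.2⟩
    hvv hfv (fun u => hLf u.1 u.2)

/-- Transfer between two degree-1 vertices. -/
lemma leaf_transfer {A : ∀ n : ℕ, SimpleGraph (Fin n) → (Fin n → Bool) → Fin n → Bool}
    (hA : IsLocalVerifier Bool 1 A) {n n' : ℕ}
    {G : SimpleGraph (Fin n)} {G' : SimpleGraph (Fin n')}
    (hG : G.Connected) (hG' : G'.Connected)
    {L : Fin n → Bool} {L' : Fin n' → Bool} {v a : Fin n} {v' a' : Fin n'}
    (hnb : ∀ u, G.Adj v u ↔ u = a) (hnb' : ∀ u, G'.Adj v' u ↔ u = a')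
    (hLv : L v = L' v') (hLa : L a = L' a') :
    A n G L v = A n' G' L' v' := by
  have hva : G.Adj v a := (hnb a).mpr rfl
  have hva' : G'.Adj v' a' := (hnb' a').mpr rfl
  have hne : a ≠ v := hva.ne'
  have hne' : a' ≠ v' := hva'.ne'
  have hball : ∀ u, G.dist v u ≤ 1 → (u = v ∨ u = a) := by
    intro u hu
    rcases (dist_le_one_iff hG v u).mp hu with h | h
    · exact Or.inl h
    · exact Or.inr ((hnb u).mp h)
  have hball' : ∀ u', G'.dist v' u' ≤ 1 → (u' = v' ∨ u' = a') := by
    intro u hu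
    rcases (dist_le_one_iff hG' v' u).mp hu with h | h
    · exact Or.inl h
    · exact Or.inr ((hnb' u).mp h)
  refine transfer hA (fun u => if u = v then v' else a')
      (fun u' => if u' = v' then v else a) ?_ ?_ ?_ ?_ ?_ ?_ ?_
  · intro u hu
    rcases hball u hu with rfl | rfl
    · simp [dist_le_one_iff hG' v']
    · simp only [if_neg hne]
      exact (dist_le_one_iff hG' v' a').mpr (Or.inr hva')
  · intro u' hu'
    rcases hball' u' hu' with rfl | rfl
    · simp [dist_le_one_iff hG v]
    · simp only [if_neg hne']
      exact (dist_le_one_iff hG v a).mpr (Or.inr hva)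
  · intro u hu
    rcases hball u hu with rfl | rfl
    · simp
    · simp [hne, hne']
  · intro u' hu'
    rcases hball' u' hu' with rfl | rfl
    · simp
    · simp [hne, hne']
  · intro u w hu hw
    rcases hball u hu with rfl | rfl <;> rcases hball w hw with rfl | rfl
    · simp [G.irrefl, G'.irrefl]
    · simp only [if_pos rfl, if_neg hne]
      simp [hva, hva']
    · simp only [if_pos rfl, if_neg hne]
      simp [hva.symm, hva'.symm]
    · simp [if_neg hne, G.irrefl, G'.irrefl]
  · simp
  · intro u hu
    rcases hball u hu with rfl | rfl
    · simpa using hLv.symm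
    · simp only [if_neg hne]
      exact hLa.symm

/-- Transfer between two degree-2 vertices whose two neighbours are non-adjacent. -/
lemma deg2_transfer {A : ∀ n : ℕ, SimpleGraph (Fin n) → (Fin n → Bool) → Fin n → Bool}
    (hA : IsLocalVerifier Bool 1 A) {n n' : ℕ}
    {G : SimpleGraph (Fin n)} {G' : SimpleGraph (Fin n')}
    (hG : G.Connected) (hG' : G'.Connected)
    {L : Fin n → Bool} {L' : Fin n' → Bool} {v a b : Fin n} {v' a' b' : Fin n'}
    (hnb : ∀ u, G.Adj v u ↔ u = a ∨ u = b) (hnb' : ∀ u, G'.Adj v' u ↔ u = a' ∨ u = b')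
    (hab : a ≠ b) (hab' : a' ≠ b')
    (hnadj : ¬ G.Adj a b) (hnadj' : ¬ G'.Adj a' b')
    (hLv : L v = L' v') (hLa : L a = L' a') (hLb : L b = L' b') :
    A n G L v = A n' G' L' v' := by
  have hva : G.Adj v a := (hnb a).mpr (Or.inl rfl)
  have hvb : G.Adj v b := (hnb b).mpr (Or.inr rfl)
  have hva' : G'.Adj v' a' := (hnb' a').mpr (Or.inl rfl)
  have hvb' : G'.Adj v' b' := (hnb' b').mpr (Or.inr rfl)
  have hav : a ≠ v := hva.ne'
  have hbv : b ≠ v := hvb.ne'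
  have hav' : a' ≠ v' := hva'.ne'
  have hbv' : b' ≠ v' := hvb'.ne'
  have hball : ∀ u, G.dist v u ≤ 1 → (u = v ∨ u = a ∨ u = b) := by
    intro u hu
    rcases (dist_le_one_iff hG v u).mp hu with h | h
    · exact Or.inl h
    · exact Or.inr ((hnb u).mp h)
  have hball' : ∀ u', G'.dist v' u' ≤ 1 → (u' = v' ∨ u' = a' ∨ u' = b') := by
    intro u hu
    rcases (dist_le_one_iff hG' v' u).mp hu with h | h
    · exact Or.inl h
    · exact Or.inr ((hnb' u).mp h)
  refine transfer hA
      (fun u => if u = v then v' else if u = a then a' else b')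
      (fun u' => if u' = v' then v else if u' = a' then a else b) ?_ ?_ ?_ ?_ ?_ ?_ ?_
  · intro u hu
    rcases hball u hu with rfl | rfl | rfl
    · simp [dist_le_one_iff hG' v']
    · simp only [if_neg hav, if_pos rfl]
      exact (dist_le_one_iff hG' v' a').mpr (Or.inr hva')
    · simp only [if_neg hbv, if_neg (Ne.symm hab)]
      exact (dist_le_one_iff hG' v' b').mpr (Or.inr hvb')
  · intro u' hu'
    rcases hball' u' hu' with rfl | rfl | rfl
    · simp [dist_le_one_iff hG v]
    · simp only [if_neg hav', if_pos rfl]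
      exact (dist_le_one_iff hG v a).mpr (Or.inr hva)
    · simp only [if_neg hbv', if_neg (Ne.symm hab')]
      exact (dist_le_one_iff hG v b).mpr (Or.inr hvb)
  · intro u hu
    rcases hball u hu with rfl | rfl | rfl
    · simp
    · simp [hav, hav']
    · simp [hbv, hbv', Ne.symm hab, Ne.symm hab']
  · intro u' hu'
    rcases hball' u' hu' with rfl | rfl | rfl
    · simp
    · simp [hav, hav']
    · simp [hbv, hbv', Ne.symm hab, Ne.symm hab']
  · have hnadj2 : ¬ G.Adj b a := fun h => hnadj h.symm
    have hnadj2' : ¬ G'.Adj b' a' := fun h => hnadj' h.symm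
    intro u w hu hw
    rcases hball u hu with rfl | rfl | rfl <;> rcases hball w hw with rfl | rfl | rfl <;>
      simp only [if_pos rfl, if_neg hav, if_neg hbv, if_neg (Ne.symm hab)] <;>
      simp [hva, hvb, hva', hvb', hva.symm, hvb.symm, hva'.symm, hvb'.symm,
        hnadj, hnadj', hnadj2, hnadj2', G.irrefl, G'.irrefl]
  · simp
  · intro u hu
    rcases hball u hu with rfl | rfl | rfl
    · simpa using hLv.symm
    · simp only [if_neg hav, if_pos rfl]
      exact hLa.symm
    · simp only [if_neg hbv, if_neg (Ne.symm hab)]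
      exact hLb.symm


/-! ### The combinatorial core: fooling path labelings -/

/-- A radius-1 view `(a,b,c)` of an interior path vertex is *genuine* for the
pendant labels `x0,…,x5` if it matches the view of one of the degree-2
pendant vertices of the tadpole. -/
def TripOk (x0 x1 x2 x3 x4 x5 a b c : Bool) : Prop :=
  (x1 = b ∧ ((x0 = a ∧ x2 = c) ∨ (x0 = c ∧ x2 = a))) ∨
  (x2 = b ∧ ((x1 = a ∧ x3 = c) ∨ (x1 = c ∧ x3 = a))) ∨
  (x3 = b ∧ ((x2 = a ∧ x4 = c) ∨ (x2 = c ∧ x4 = a))) ∨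
  (x4 = b ∧ ((x3 = a ∧ x5 = c) ∨ (x3 = c ∧ x5 = a)))

instance (x0 x1 x2 x3 x4 x5 a b c : Bool) :
    Decidable (TripOk x0 x1 x2 x3 x4 x5 a b c) := by
  unfold TripOk; infer_instance

/-- `ys` labels a path all of whose radius-1 views are genuine views of the
tadpole labeled by `x0,…,x5` along its pendant. -/
def Ok (x0 x1 x2 x3 x4 x5 : Bool) (ys : List Bool) : Prop :=
  3 ≤ ys.length ∧ ys.length ≤ 6 ∧
  ys.getD 0 false = x5 ∧ ys.getD 1 false = x4 ∧
  ys.getD (ys.length - 1) false = x5 ∧ ys.getD (ys.length - 2) false = x4 ∧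
  ∀ j : ℕ, j < ys.length → 1 ≤ j → j + 1 ≤ ys.length - 1 →
    TripOk x0 x1 x2 x3 x4 x5 (ys.getD (j - 1) false) (ys.getD j false)
      (ys.getD (j + 1) false)

instance (x0 x1 x2 x3 x4 x5 : Bool) (ys : List Bool) :
    Decidable (Ok x0 x1 x2 x3 x4 x5 ys) := by
  unfold Ok; infer_instance

def pick (x0 x1 x2 x3 x4 x5 : Bool) : List Bool :=
  (([[x5, x4, x5],
     [x5, x4, x3, x4, x5],
     [x5, x5, !x5, !x5, x5, x5],
     [x5, x4, x4, x5]] : List (List Bool)).find?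
    (fun ys => decide (Ok x0 x1 x2 x3 x4 x5 ys))).getD [x5, x4, x4, x5]

lemma pick_ok : ∀ x0 x1 x2 x3 x4 x5 : Bool,
    Ok x0 x1 x2 x3 x4 x5 (pick x0 x1 x2 x3 x4 x5) := by decide


/-- The tadpole graph: triangle 0-1-2 with pendant path 0-3-4-5-6-7. -/
def tadAdjB (a b : Fin 8) : Bool :=
  let e : List (ℕ × ℕ) := [(0,1),(1,2),(0,2),(0,3),(3,4),(4,5),(5,6),(6,7)]
  e.contains (a.val, b.val) || e.contains (b.val, a.val)

lemma tad_symm : ∀ a b : Fin 8, tadAdjB a b = true → tadAdjB b a = true := by decide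
lemma tad_irr : ∀ a : Fin 8, ¬ tadAdjB a a = true := by decide

def Gtad : SimpleGraph (Fin 8) where
  Adj a b := tadAdjB a b = true
  symm := ⟨fun a b h => tad_symm a b h⟩
  loopless := ⟨fun a h => tad_irr a h⟩

instance : DecidableRel Gtad.Adj := fun a b =>
  inferInstanceAs (Decidable (tadAdjB a b = true))

lemma Gtad_conn : Gtad.Connected := by
  rw [connected_iff]
  exact ⟨by decide, inferInstance⟩

lemma tad01 : Gtad.Adj 0 1 := by decide
lemma tad12 : Gtad.Adj 1 2 := by decide
lemma tad20 : Gtad.Adj 2 0 := by decide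

def tadTri : Gtad.Walk 0 0 := Walk.cons tad01 (Walk.cons tad12 (Walk.cons tad20 Walk.nil))

lemma Gtad_cyc : ¬ Gtad.IsAcyclic := by
  intro h
  exact h tadTri ⟨⟨⟨by decide⟩, by simp [tadTri]⟩, by decide⟩

/-! ### path graphs -/

instance pgDec (n : ℕ) : DecidableRel (pathGraph n).Adj := fun u v =>
  decidable_of_iff _ (pathGraph_adj (n := n) (u := u) (v := v)).symm

instance pgDelDec (n : ℕ) (e : Sym2 (Fin n)) :
    DecidableRel ((pathGraph n) \ fromEdgeSet {e}).Adj := fun u v =>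
  decidable_of_iff ((pathGraph n).Adj u v ∧ ¬ (s(u,v) = e ∧ u ≠ v))
    (by simp [sdiff_adj, fromEdgeSet_adj])

lemma pg_acyclic_of_bridges (n : ℕ)
    (h : ∀ v w : Fin n, (pathGraph n).Adj v w →
      ¬ ((pathGraph n) \ fromEdgeSet {s(v,w)}).Reachable v w) :
    (pathGraph n).IsAcyclic := by
  rw [isAcyclic_iff_forall_adj_isBridge]
  intro v w hadj
  rw [isBridge_iff]
  exact h v w hadj

set_option maxHeartbeats 2000000 in
lemma pg_acyclic {r : ℕ} (h3 : 3 ≤ r) (h9 : r ≤ 6) : (pathGraph r).IsAcyclic := by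
  interval_cases r
  · exact pg_acyclic_of_bridges 3 (by decide)
  · exact pg_acyclic_of_bridges 4 (by decide)
  · exact pg_acyclic_of_bridges 5 (by decide)
  · exact pg_acyclic_of_bridges 6 (by decide)

lemma pg_conn {r : ℕ} (h : 1 ≤ r) : (pathGraph r).Connected := by
  obtain ⟨m, rfl⟩ : ∃ m, r = m + 1 := ⟨r - 1, by omega⟩
  exact pathGraph_connected m

lemma pg_nb0 {r : ℕ} (h : 2 ≤ r) (u : Fin r) :
    (pathGraph r).Adj ⟨0, by omega⟩ u ↔ u = ⟨1, by omega⟩ := by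
  rw [pathGraph_adj, Fin.ext_iff]
  simp only [Fin.val_mk]
  omega

lemma pg_nbLast {r : ℕ} (h : 2 ≤ r) (u : Fin r) :
    (pathGraph r).Adj ⟨r - 1, by omega⟩ u ↔ u = ⟨r - 2, by omega⟩ := by
  rw [pathGraph_adj, Fin.ext_iff]
  simp only [Fin.val_mk]
  have := u.isLt
  omega

lemma pg_nbMid {r : ℕ} {j : ℕ} (h1 : 1 ≤ j) (h2 : j + 1 ≤ r - 1) (u : Fin r) :
    (pathGraph r).Adj ⟨j, by omega⟩ u ↔
      u = ⟨j - 1, by omega⟩ ∨ u = ⟨j + 1, by omega⟩ := by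
  rw [pathGraph_adj, Fin.ext_iff, Fin.ext_iff]
  simp only [Fin.val_mk]
  omega

lemma pg_mid_ne {r : ℕ} {j : ℕ} (h1 : 1 ≤ j) (h2 : j + 1 ≤ r - 1) :
    (⟨j - 1, by omega⟩ : Fin r) ≠ ⟨j + 1, by omega⟩ := by
  rw [Ne, Fin.ext_iff]
  simp only [Fin.val_mk]
  omega

lemma pg_mid_nadj {r : ℕ} {j : ℕ} (h1 : 1 ≤ j) (h2 : j + 1 ≤ r - 1) :
    ¬ (pathGraph r).Adj ⟨j - 1, by omega⟩ ⟨j + 1, by omega⟩ := by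
  rw [pathGraph_adj]
  simp only [Fin.val_mk]
  omega


/-! ### Gtad neighbourhood data -/

lemma nb7 : ∀ u, Gtad.Adj 7 u ↔ u = 6 := by decide
lemma nb3 : ∀ u, Gtad.Adj 3 u ↔ u = 0 ∨ u = 4 := by decide
lemma nb4 : ∀ u, Gtad.Adj 4 u ↔ u = 3 ∨ u = 5 := by decide
lemma nb5 : ∀ u, Gtad.Adj 5 u ↔ u = 4 ∨ u = 6 := by decide
lemma nb6 : ∀ u, Gtad.Adj 6 u ↔ u = 5 ∨ u = 7 := by decide

lemma nbflip {g p q : Fin 8} (h : ∀ u, Gtad.Adj g u ↔ u = p ∨ u = q) :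
    ∀ u, Gtad.Adj g u ↔ u = q ∨ u = p := fun u => (h u).trans or_comm

/-- Transfer an interior path-vertex verdict to a tadpole vertex. -/
lemma mid_case {A : ∀ n : ℕ, SimpleGraph (Fin n) → (Fin n → Bool) → Fin n → Bool}
    (hA : IsLocalVerifier Bool 1 A) {r j : ℕ} (h1 : 1 ≤ j) (h2 : j + 1 ≤ r - 1)
    (Y : Fin r → Bool) (L : Fin 8 → Bool) (g p q : Fin 8)
    (hnbg : ∀ u, Gtad.Adj g u ↔ u = p ∨ u = q) (hpq : p ≠ q) (hnadjg : ¬ Gtad.Adj p q)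
    (hc : L g = Y ⟨j, by omega⟩) (hp : L p = Y ⟨j - 1, by omega⟩)
    (hq : L q = Y ⟨j + 1, by omega⟩) :
    A r (pathGraph r) Y ⟨j, by omega⟩ = A 8 Gtad L g :=
  deg2_transfer hA (pg_conn (by omega)) Gtad_conn (pg_nbMid h1 h2) hnbg
    (pg_mid_ne h1 h2) hpq (pg_mid_nadj h1 h2) hnadjg hc.symm hp.symm hq.symm

end NoTwoLabel

open NoTwoLabel in
theorem no_two_label_cycle_detection_view_distance_one :
    ¬ ∃ A : ∀ n : ℕ, SimpleGraph (Fin n) → (Fin n → Bool) → Fin n → Bool,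
      IsLocalVerifier Bool 1 A ∧
      (∀ (n : ℕ) (G : SimpleGraph (Fin n)), G.Connected → ¬ G.IsAcyclic →
        ∃ L : Fin n → Bool, ∀ v : Fin n, A n G L v = true) ∧
      (∀ (n : ℕ), 1 ≤ n → ∀ G : SimpleGraph (Fin n), G.Connected → G.IsAcyclic →
        ∀ L : Fin n → Bool, ∃ v : Fin n, A n G L v = false) := by
  rintro ⟨A, hA, hC, hS⟩
  obtain ⟨L, hL⟩ := hC 8 Gtad Gtad_conn Gtad_cyc
  obtain ⟨h3, h6, hd0, hd1, hdl, hdl2, hmid⟩ :=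
    pick_ok (L 0) (L 3) (L 4) (L 5) (L 6) (L 7)
  set ys : List Bool := pick (L 0) (L 3) (L 4) (L 5) (L 6) (L 7) with hys
  set r : ℕ := ys.length with hr
  set Y : Fin r → Bool := fun j => ys.getD j.val false with hY
  obtain ⟨w, hw⟩ := hS r (by omega) (SimpleGraph.pathGraph r)
    (pg_conn (by omega)) (pg_acyclic h3 h6) Y
  rcases w with ⟨j, hj⟩
  have htrue : A r (SimpleGraph.pathGraph r) Y ⟨j, hj⟩ = true := by
    rcases Nat.lt_or_ge j 1 with hj0 | hj1
    · -- j = 0 : the starting leaf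
      have hj0' : j = 0 := by omega
      subst hj0'
      have h := leaf_transfer hA (pg_conn (by omega)) Gtad_conn
        (pg_nb0 (by omega)) nb7
        (v := (⟨0, by omega⟩ : Fin r)) (a := ⟨1, by omega⟩)
        (show Y ⟨0, by omega⟩ = L 7 from hd0) (show Y ⟨1, by omega⟩ = L 6 from hd1)
      rw [h]
      exact hL 7
    rcases Nat.lt_or_ge j (r - 1) with hjlt | hjge
    · -- interior vertex
      have h2 : j + 1 ≤ r - 1 := by omega
      have htrip := hmid j hj hj1 h2
      have e0 : Y ⟨j, hj⟩ = ys.getD j false := rfl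
      rcases htrip with ⟨hb, ⟨hp, hq⟩ | ⟨hp, hq⟩⟩ | ⟨hb, ⟨hp, hq⟩ | ⟨hp, hq⟩⟩ |
        ⟨hb, ⟨hp, hq⟩ | ⟨hp, hq⟩⟩ | ⟨hb, ⟨hp, hq⟩ | ⟨hp, hq⟩⟩
      · rw [mid_case hA hj1 h2 Y L 3 0 4 nb3 (by decide) (by decide) hb hp hq]
        exact hL 3
      · rw [mid_case hA hj1 h2 Y L 3 4 0 (nbflip nb3) (by decide) (by decide) hb hq hp]
        exact hL 3
      · rw [mid_case hA hj1 h2 Y L 4 3 5 nb4 (by decide) (by decide) hb hp hq]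
        exact hL 4
      · rw [mid_case hA hj1 h2 Y L 4 5 3 (nbflip nb4) (by decide) (by decide) hb hq hp]
        exact hL 4
      · rw [mid_case hA hj1 h2 Y L 5 4 6 nb5 (by decide) (by decide) hb hp hq]
        exact hL 5
      · rw [mid_case hA hj1 h2 Y L 5 6 4 (nbflip nb5) (by decide) (by decide) hb hq hp]
        exact hL 5
      · rw [mid_case hA hj1 h2 Y L 6 5 7 nb6 (by decide) (by decide) hb hp hq]
        exact hL 6
      · rw [mid_case hA hj1 h2 Y L 6 7 5 (nbflip nb6) (by decide) (by decide) hb hq hp]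
        exact hL 6
    · -- j = r - 1 : the final leaf
      have hj' : j = r - 1 := by omega
      subst hj'
      have h := leaf_transfer hA (pg_conn (by omega)) Gtad_conn
        (pg_nbLast (by omega)) nb7
        (v := (⟨r - 1, by omega⟩ : Fin r)) (a := ⟨r - 2, by omega⟩)
        (show Y ⟨r - 1, by omega⟩ = L 7 from hdl) (show Y ⟨r - 2, by omega⟩ = L 6 from hdl2)
      rw [h]
      exact hL 7
  rw [htrue] at hw
  exact absurd hw (by simp)
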